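/- Let k = 0 (a synchronous channel). If the distinction between a channel operation and its completion is dropped, then for every index i, the happens-before relation hb₀ (the transitive closure of R₀) satisfies both hb₀ (sd i) (rv i) and hb₀ (rv i) (sd i); consequently hb₀ is neither asymmetric nor irreflexive, i.e., it fails to be a strict partial order. -/

import Mathlib

/-- Events of a single channel: the i-th send and the i-th receive. -/
inductive Ev : Type
  | sd : ℕ → Ev
  | rv : ℕ → Ev

open Ev

/-- The "conflated" generating relation for a channel of capacity `k`,
obtained by dropping the distinction between a channel operation and its
completion: a send happens-before the corresponding receive, and the i-th
receive happens-before the (i+k)-th send. -/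
inductive R (k : ℕ) : Ev → Ev → Prop
  | send_rv (i : ℕ) : R k (sd i) (rv i)
  | rv_send (i : ℕ) : R k (rv i) (sd (i + k))

/-- The conflated happens-before relation: transitive closure of `R k`. -/
def hb (k : ℕ) : Ev → Ev → Prop := Relation.TransGen (R k)

theorem conflated_sync_not_strict_order :
    (∀ i : ℕ, hb 0 (sd i) (rv i) ∧ hb 0 (rv i) (sd i)) ∧
    ¬ (∀ x y : Ev, hb 0 x y → ¬ hb 0 y x) ∧ ¬ Irreflexive (hb 0) := by
  have h : ∀ i : ℕ, hb 0 (sd i) (rv i) ∧ hb 0 (rv i) (sd i) := by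
    intro i
    constructor
    · exact Relation.TransGen.single (R.send_rv i)
    · have := Relation.TransGen.single (R.rv_send (k := 0) i)
      simpa [hb] using this
  refine ⟨h, ?_, ?_⟩
  · intro H
    exact H _ _ (h 0).1 (h 0).2
  · intro H
    exact H (sd 0) ((h 0).1.trans (h 0).2)
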